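/- Let ν ≥ 1/2, j > ν, and let L : [0,1) → ℝ be a C² solution of L''(z) + (j² - (ν² - 1/4)/(1-z)²)·L(z) = 0 with L(0) = 0 and L'(0) = j. Then for every a ∈ (0,1) and all z ∈ [0, 1-a], one has |L(z)| ≤ exp((ν² - 1/4)/ν · (1-a)/a). -/

import Mathlib

theorem rescaled_bessel_uniform_bound (ν j : ℝ) (hν : 1 / 2 ≤ ν) (hj : ν < j)
    (L L' L'' : ℝ → ℝ)
    (hL' : ∀ z ∈ Set.Ico (0:ℝ) 1, HasDerivAt L (L' z) z)
    (hL'' : ∀ z ∈ Set.Ico (0:ℝ) 1, HasDerivAt L' (L'' z) z)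
    (hODE : ∀ z ∈ Set.Ico (0:ℝ) 1,
      L'' z + (j ^ 2 - (ν ^ 2 - 1 / 4) / (1 - z) ^ 2) * L z = 0)
    (hL0 : L 0 = 0) (hL'0 : L' 0 = j) :
    ∀ a ∈ Set.Ioo (0:ℝ) 1, ∀ z ∈ Set.Icc (0:ℝ) (1 - a),
      |L z| ≤ Real.exp ((ν ^ 2 - 1 / 4) / ν * ((1 - a) / a)) := by
  intro a ha z hz
  have hν0 : (0:ℝ) < ν := by linarith
  have hj0 : (0:ℝ) < j := by linarith
  have hC : (0:ℝ) ≤ ν ^ 2 - 1 / 4 := by nlinarith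
  set C : ℝ := ν ^ 2 - 1 / 4 with hCdef
  set E : ℝ → ℝ := fun x => L x ^ 2 + (L' x / j) ^ 2 with hEdef
  set φ : ℝ → ℝ := fun x => C / j * (x / (1 - x)) with hφdef
  set G : ℝ → ℝ := fun x => E x * Real.exp (-φ x) with hGdef
  -- derivative facts on Ico 0 1
  have hGderiv : ∀ x ∈ Set.Ico (0:ℝ) 1, ∃ d, HasDerivAt G d x ∧ d ≤ 0 := by
    intro x hx
    have hx1 : x < 1 := hx.2
    have hne : (1 - x) ≠ 0 := by linarith
    have hsq : (0:ℝ) < (1 - x) ^ 2 := by positivity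
    have hE' : HasDerivAt E (2 * L x * L' x + 2 * (L' x / j) * (L'' x / j)) x := by
      have h1 : HasDerivAt (fun y => L y ^ 2) (2 * L x ^ 1 * L' x) x := (hL' x hx).pow 2
      have h2 : HasDerivAt (fun y => (L' y / j) ^ 2) (2 * (L' x / j) ^ 1 * (L'' x / j)) x :=
        ((hL'' x hx).div_const j).pow 2
      have h3 := h1.add h2
      simp only [pow_one] at h3
      exact h3
    have hφ' : HasDerivAt φ (C / j * (1 / (1 - x) ^ 2)) x := by
      have h1 : HasDerivAt (fun y : ℝ => y / (1 - y))
          ((1 * (1 - x) - x * (0 - 1)) / (1 - x) ^ 2) x :=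
        (hasDerivAt_id x).div ((hasDerivAt_const x 1).sub (hasDerivAt_id x)) hne
      have h2 := h1.const_mul (C / j)
      rw [show C / j * (1 / (1 - x) ^ 2) = C / j * ((1 * (1 - x) - x * (0 - 1)) / (1 - x) ^ 2) by ring]
      exact h2
    have hG' : HasDerivAt G
        ((2 * L x * L' x + 2 * (L' x / j) * (L'' x / j)) * Real.exp (-φ x)
          + E x * (Real.exp (-φ x) * -(C / j * (1 / (1 - x) ^ 2)))) x :=
      hE'.mul (hφ'.neg.exp)
    refine ⟨_, hG', ?_⟩
    have hODEx := hODE x hx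
    have hLpp : L'' x = (C / (1 - x) ^ 2 - j ^ 2) * L x := by linarith
    have hexp : (0:ℝ) < Real.exp (-φ x) := Real.exp_pos _
    have key : (2 * L x * L' x + 2 * (L' x / j) * (L'' x / j))
        - C / j * (1 / (1 - x) ^ 2) * E x ≤ 0 := by
      rw [hLpp, hEdef]
      have hq : (0:ℝ) ≤ C / (1 - x) ^ 2 := by positivity
      have hs := sq_nonneg (L x - L' x / j)
      have e1 : 2 * L x * L' x + 2 * (L' x / j) * ((C / (1 - x) ^ 2 - j ^ 2) * L x / j)
          - C / j * (1 / (1 - x) ^ 2) * (L x ^ 2 + (L' x / j) ^ 2)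
          = - (C / (1 - x) ^ 2 / j) * (L x - L' x / j) ^ 2 := by
        field_simp
        ring
      rw [e1]
      have : (0:ℝ) ≤ C / (1 - x) ^ 2 / j := by positivity
      nlinarith
    nlinarith [mul_nonneg (le_of_lt hexp) (neg_nonneg.mpr key)]
  -- subset
  have hsub : Set.Icc (0:ℝ) (1 - a) ⊆ Set.Ico (0:ℝ) 1 := by
    intro x hx
    exact ⟨hx.1, by linarith [hx.2, ha.1]⟩
  -- monotonicity of G on [0, 1-a]
  have hmono : AntitoneOn G (Set.Icc (0:ℝ) (1 - a)) := by
    apply antitoneOn_of_deriv_nonpos (convex_Icc _ _)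
    · intro x hx
      obtain ⟨d, hd, _⟩ := hGderiv x (hsub hx)
      exact hd.continuousAt.continuousWithinAt
    · intro x hx
      rw [interior_Icc] at hx
      obtain ⟨d, hd, _⟩ := hGderiv x (hsub ⟨le_of_lt hx.1, le_of_lt hx.2⟩)
      exact hd.differentiableAt.differentiableWithinAt
    · intro x hx
      rw [interior_Icc] at hx
      obtain ⟨d, hd, hd0⟩ := hGderiv x (hsub ⟨le_of_lt hx.1, le_of_lt hx.2⟩)
      rw [hd.deriv]; exact hd0
  have hz0 : (0:ℝ) ∈ Set.Icc (0:ℝ) (1 - a) := ⟨le_refl _, by linarith [ha.2, hz.1, hz.2]⟩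
  have hGz : G z ≤ G 0 := hmono hz0 hz hz.1
  have hG0 : G 0 = 1 := by
    simp only [hGdef, hEdef, hφdef, hL0, hL'0]
    rw [div_self (ne_of_gt hj0)]
    norm_num
  -- E z ≤ exp (φ z)
  have hEz : E z ≤ Real.exp (φ z) := by
    rw [hG0] at hGz
    have hexp : (0:ℝ) < Real.exp (-φ z) := Real.exp_pos _
    have : E z ≤ 1 / Real.exp (-φ z) := by
      rw [le_div_iff₀ hexp]; exact hGz
    rwa [Real.exp_neg, one_div, inv_inv] at this
  -- φ z ≤ X
  set X : ℝ := C / ν * ((1 - a) / a) with hXdef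
  have hX0 : (0:ℝ) ≤ X := by
    apply mul_nonneg (div_nonneg hC (le_of_lt hν0))
    apply div_nonneg (by linarith [ha.2]) (le_of_lt ha.1)
  have hφX : φ z ≤ X := by
    have h1z : 0 < 1 - z := by linarith [hz.2, ha.1]
    have hzz : z / (1 - z) ≤ (1 - a) / a := by
      rw [div_le_div_iff₀ h1z ha.1]
      nlinarith [hz.2, ha.1, hz.1]
    have hCj : C / j ≤ C / ν := by
      apply div_le_div_of_nonneg_left hC hν0 (le_of_lt hj)
      -- fallback handled below
    calc φ z = C / j * (z / (1 - z)) := rfl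
      _ ≤ C / ν * ((1 - a) / a) := by
          apply mul_le_mul hCj hzz
          · apply div_nonneg hz.1 (le_of_lt h1z)
          · exact div_nonneg hC (le_of_lt hν0)
      _ = X := rfl
  -- conclude
  have hLsq : L z ^ 2 ≤ Real.exp X ^ 2 := by
    have h1 : Real.exp (φ z) ≤ Real.exp X := Real.exp_le_exp.mpr hφX
    have h2 : (1:ℝ) ≤ Real.exp X := Real.one_le_exp hX0
    have hEz' : L z ^ 2 + (L' z / j) ^ 2 ≤ Real.exp (φ z) := hEz
    nlinarith [sq_nonneg (L' z / j), hEz', mul_le_mul_of_nonneg_left h2 (Real.exp_nonneg X)]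
  calc |L z| = Real.sqrt (L z ^ 2) := (Real.sqrt_sq_eq_abs _).symm
    _ ≤ Real.sqrt (Real.exp X ^ 2) := Real.sqrt_le_sqrt hLsq
    _ = Real.exp X := Real.sqrt_sq (Real.exp_nonneg _)
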